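/- arXiv:2509.23064 — 3 statements merged into one kernel-verified Lean document; each statement's English description precedes it below -/
import Mathlib

section
/- Let s ∈ (1/2, 1]. Then for every t ∈ ℝ, |t·F_s'(t)| ≤ 5·F_s(t). -/
noncomputable def theta (t : ℝ) : ℝ :=
  if |t| ≤ 1 then (3 / 8) * |t| ^ ((1 : ℝ) / 2) * (|t| ^ 2 - (10 / 3) * |t| + 5) else 1

noncomputable def Fs (s t : ℝ) : ℝ := theta t * |t| ^ s

lemma key_ineq (s t : ℝ) (hs1 : 1 / 2 < s) (hs2 : s ≤ 1) (ht0 : 0 ≤ t) (ht1 : t ≤ 1) :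
    |(1/2 + s) * (t^2 - 10/3*t + 5) + (2*t^2 - 10/3*t)| ≤ 5 * (t^2 - 10/3*t + 5) := by
  rw [abs_le]
  constructor <;>
    nlinarith [sq_nonneg (1-t), mul_nonneg (sub_nonneg.2 ht1) (sub_nonneg.2 hs2),
      mul_nonneg (sub_nonneg.2 ht1) ht0, mul_nonneg (mul_nonneg (sub_nonneg.2 ht1) (sub_nonneg.2 ht1)) (sub_nonneg.2 hs2),
      mul_nonneg ht0 ht0, sq_nonneg t]

lemma hasDerivAt_g (s t : ℝ) (ht : t ≠ 0) :
    HasDerivAt (fun x : ℝ => 3/8 * x ^ ((1:ℝ)/2) * (x^2 - 10/3*x + 5) * x ^ s)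
      (((3/8 * ((1:ℝ)/2 * t ^ ((1:ℝ)/2 - 1))) * (t^2 - 10/3*t + 5)
         + (3/8 * t ^ ((1:ℝ)/2)) * (2*t - 10/3)) * t ^ s
        + (3/8 * t ^ ((1:ℝ)/2) * (t^2 - 10/3*t + 5)) * (s * t ^ (s-1))) t := by
  have h1 : HasDerivAt (fun x : ℝ => x ^ ((1:ℝ)/2)) ((1:ℝ)/2 * t ^ ((1:ℝ)/2 - 1)) t :=
    Real.hasDerivAt_rpow_const (Or.inl ht)
  have h2 : HasDerivAt (fun x : ℝ => x^2 - 10/3*x + 5) (2*t - 10/3) t := by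
    have := (((hasDerivAt_pow 2 t).sub ((hasDerivAt_id t).const_mul ((10:ℝ)/3))).add_const 5)
    simpa using this.congr_deriv (by push_cast; ring)
  have h3 : HasDerivAt (fun x : ℝ => x ^ s) (s * t ^ (s-1)) t :=
    Real.hasDerivAt_rpow_const (Or.inl ht)
  exact ((h1.const_mul (3/8)).mul h2).mul h3

lemma Fs_eq_inner (s x : ℝ) (hx : 0 < x) (hx1 : x ≤ 1) :
    Fs s x = 3/8 * x ^ ((1:ℝ)/2) * (x^2 - 10/3*x + 5) * x ^ s := by
  rw [Fs, theta, abs_of_pos hx, if_pos hx1]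

lemma Fs_eq_outer (s x : ℝ) (hx1 : 1 ≤ x) : Fs s x = x ^ s := by
  have hx : 0 < x := lt_of_lt_of_le one_pos hx1
  rcases eq_or_lt_of_le hx1 with h | h
  · rw [Fs, theta, ← h]
    norm_num [Real.one_rpow]
  · rw [Fs, theta, abs_of_pos hx, if_neg (by linarith), one_mul]

/-- the bound, given the derivative value, for 0 < t ≤ 1 -/
lemma bound_inner (s t : ℝ) (hs1 : 1 / 2 < s) (hs2 : s ≤ 1) (ht : 0 < t) (ht1 : t ≤ 1)
    (hd : deriv (Fs s) t = ((3/8 * ((1:ℝ)/2 * t ^ ((1:ℝ)/2 - 1))) * (t^2 - 10/3*t + 5)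
         + (3/8 * t ^ ((1:ℝ)/2)) * (2*t - 10/3)) * t ^ s
        + (3/8 * t ^ ((1:ℝ)/2) * (t^2 - 10/3*t + 5)) * (s * t ^ (s-1))) :
    |t * deriv (Fs s) t| ≤ 5 * Fs s t := by
  rw [hd, Fs_eq_inner s t ht ht1]
  have e1 : t * t ^ ((1:ℝ)/2 - 1) = t ^ ((1:ℝ)/2) := by
    rw [mul_comm, ← Real.rpow_add_one ht.ne']
    norm_num
  have e2 : t * t ^ (s - 1) = t ^ s := by
    rw [mul_comm, ← Real.rpow_add_one ht.ne', sub_add_cancel]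
  have heq : t * (((3/8 * ((1:ℝ)/2 * t ^ ((1:ℝ)/2 - 1))) * (t^2 - 10/3*t + 5)
         + (3/8 * t ^ ((1:ℝ)/2)) * (2*t - 10/3)) * t ^ s
        + (3/8 * t ^ ((1:ℝ)/2) * (t^2 - 10/3*t + 5)) * (s * t ^ (s-1)))
      = (3/8 * t ^ ((1:ℝ)/2) * t ^ s) * ((1/2 + s) * (t^2 - 10/3*t + 5) + (2*t^2 - 10/3*t)) := by
    rw [← e1, ← e2]; ring
  rw [heq, abs_mul]
  have hu : (0:ℝ) < t ^ ((1:ℝ)/2) := Real.rpow_pos_of_pos ht _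
  have hw : (0:ℝ) < t ^ s := Real.rpow_pos_of_pos ht _
  have hc : (0:ℝ) < 3/8 * t ^ ((1:ℝ)/2) * t ^ s := by positivity
  rw [abs_of_pos hc]
  have hk := key_ineq s t hs1 hs2 ht.le ht1
  nlinarith [mul_le_mul_of_nonneg_left hk hc.le]

/-- For `s ∈ (1/2, 1]`: `|t · F_s'(t)| ≤ 5 · F_s(t)` for every `t ∈ ℝ`. -/
theorem stmt_15 (s : ℝ) (hs1 : 1 / 2 < s) (hs2 : s ≤ 1) :
    ∀ t : ℝ, |t * deriv (Fs s) t| ≤ 5 * Fs s t := by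
  have main : ∀ t : ℝ, 0 ≤ t → |t * deriv (Fs s) t| ≤ 5 * Fs s t := by
    intro t ht0
    rcases eq_or_lt_of_le ht0 with rfl | htp
    · have h0 : Fs s 0 = 0 := by
        have hz : |(0:ℝ)| ^ s = 0 := by
          rw [abs_zero, Real.zero_rpow (by linarith)]
        rw [Fs, hz, mul_zero]
      simp [h0]
    rcases lt_trichotomy t 1 with h1 | rfl | h1
    · have hev : Fs s =ᶠ[nhds t]
          (fun x : ℝ => 3/8 * x ^ ((1:ℝ)/2) * (x^2 - 10/3*x + 5) * x ^ s) :=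
        Filter.eventuallyEq_of_mem (Ioo_mem_nhds htp h1)
          (fun x hx => Fs_eq_inner s x hx.1 hx.2.le)
      have hD := (hasDerivAt_g s t htp.ne').congr_of_eventuallyEq hev
      exact bound_inner s t hs1 hs2 htp h1.le hD.deriv
    · -- t = 1
      have hL : HasDerivWithinAt (Fs s)
          (((3/8 * ((1:ℝ)/2 * (1:ℝ) ^ ((1:ℝ)/2 - 1))) * ((1:ℝ)^2 - 10/3*1 + 5)
             + (3/8 * (1:ℝ) ^ ((1:ℝ)/2)) * (2*1 - 10/3)) * (1:ℝ) ^ s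
            + (3/8 * (1:ℝ) ^ ((1:ℝ)/2) * ((1:ℝ)^2 - 10/3*1 + 5)) * (s * (1:ℝ) ^ (s-1)))
          (Set.Iic 1) 1 := by
        refine ((hasDerivAt_g s 1 one_ne_zero).hasDerivWithinAt).congr_of_eventuallyEq ?_ ?_
        · filter_upwards [Filter.inter_mem (mem_nhdsWithin_of_mem_nhds (Ioi_mem_nhds one_pos))
            self_mem_nhdsWithin] with x hx
          exact Fs_eq_inner s x hx.1 hx.2
        · exact Fs_eq_inner s 1 one_pos le_rfl
      have hR : HasDerivWithinAt (Fs s)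
          (((3/8 * ((1:ℝ)/2 * (1:ℝ) ^ ((1:ℝ)/2 - 1))) * ((1:ℝ)^2 - 10/3*1 + 5)
             + (3/8 * (1:ℝ) ^ ((1:ℝ)/2)) * (2*1 - 10/3)) * (1:ℝ) ^ s
            + (3/8 * (1:ℝ) ^ ((1:ℝ)/2) * ((1:ℝ)^2 - 10/3*1 + 5)) * (s * (1:ℝ) ^ (s-1)))
          (Set.Ici 1) 1 := by
        have hb : HasDerivWithinAt (fun x : ℝ => x ^ s) (s * (1:ℝ) ^ (s-1)) (Set.Ici 1) 1 :=
          (Real.hasDerivAt_rpow_const (Or.inl one_ne_zero)).hasDerivWithinAt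
        have hc : HasDerivWithinAt (Fs s) (s * (1:ℝ) ^ (s-1)) (Set.Ici 1) 1 := by
          refine hb.congr_of_eventuallyEq ?_ (Fs_eq_outer s 1 le_rfl)
          filter_upwards [self_mem_nhdsWithin] with x hx
          exact Fs_eq_outer s x hx
        convert hc using 1
        simp [Real.one_rpow]
        ring
      have hA : HasDerivAt (Fs s)
          (((3/8 * ((1:ℝ)/2 * (1:ℝ) ^ ((1:ℝ)/2 - 1))) * ((1:ℝ)^2 - 10/3*1 + 5)
             + (3/8 * (1:ℝ) ^ ((1:ℝ)/2)) * (2*1 - 10/3)) * (1:ℝ) ^ s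
            + (3/8 * (1:ℝ) ^ ((1:ℝ)/2) * ((1:ℝ)^2 - 10/3*1 + 5)) * (s * (1:ℝ) ^ (s-1))) 1 := by
        have hu := hL.union hR
        rw [Set.Iic_union_Ici] at hu
        exact hasDerivWithinAt_univ.mp hu
      exact bound_inner s 1 hs1 hs2 one_pos le_rfl hA.deriv
    · -- t > 1
      have ht0' : (0:ℝ) < t := lt_trans one_pos h1
      have hev : Fs s =ᶠ[nhds t] (fun x : ℝ => x ^ s) :=
        Filter.eventuallyEq_of_mem (Ioi_mem_nhds h1) (fun x hx => Fs_eq_outer s x (le_of_lt hx))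
      have hD : HasDerivAt (Fs s) (s * t ^ (s-1)) t :=
        (Real.hasDerivAt_rpow_const (Or.inl ht0'.ne')).congr_of_eventuallyEq hev
      rw [hD.deriv, Fs_eq_outer s t h1.le]
      have e2 : t * t ^ (s - 1) = t ^ s := by
        rw [mul_comm, ← Real.rpow_add_one ht0'.ne', sub_add_cancel]
      have hw : (0:ℝ) < t ^ s := Real.rpow_pos_of_pos ht0' _
      have : t * (s * t ^ (s-1)) = s * t ^ s := by rw [← e2]; ring
      rw [this, abs_mul, abs_of_pos hw, abs_of_pos (by linarith : (0:ℝ) < s)]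
      nlinarith
  intro t
  rcases le_or_gt 0 t with ht | ht
  · exact main t ht
  · have r := main (-t) (by linarith)
    have heven : (fun x => Fs s (-x)) = Fs s := funext fun x => by simp [Fs, theta, abs_neg]
    have hd : deriv (Fs s) t = - deriv (Fs s) (-t) := by
      conv_lhs => rw [← heven]
      exact deriv_comp_neg (Fs s) t
    calc |t * deriv (Fs s) t| = |(-t) * deriv (Fs s) (-t)| := by
          rw [hd]; rw [show t * -deriv (Fs s) (-t) = (-t) * deriv (Fs s) (-t) by ring]
      _ ≤ 5 * Fs s (-t) := r
      _ = 5 * Fs s t := by simp [Fs, theta, abs_neg]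
end

section
/- There exists a constant k₀ > 0 such that for every s ∈ (1/2, 1] and every t ∈ ℝ, F̄(t) ≤ F_s(t)^{1/s} ≤ F̄(t) + k₀, where F̄(t) = 0 if |t| ≤ 1 and F̄(t) = |t| if |t| > 1. In fact one may take k₀ = ((3/8)(1 + 10/3 + 5))². -/
/-- The function `F̄(t) = 0` for `|t| ≤ 1` and `F̄(t) = |t|` for `|t| > 1`. -/
noncomputable def Fbar (t : ℝ) : ℝ := if |t| ≤ 1 then 0 else |t|

/-- There is `k₀ > 0` such that `F̄(t) ≤ F_s(t)^{1/s} ≤ F̄(t) + k₀` for all `s ∈ (1/2,1]`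
and `t ∈ ℝ`; in fact one may take `k₀ = ((3/8)(1 + 10/3 + 5))²`. -/
theorem stmt_17 :
    ∃ k₀ : ℝ, k₀ = ((3 / 8) * (1 + 10 / 3 + 5)) ^ 2 ∧ 0 < k₀ ∧
      ∀ s : ℝ, 1 / 2 < s → s ≤ 1 → ∀ t : ℝ,
        Fbar t ≤ Fs s t ^ (1 / s) ∧ Fs s t ^ (1 / s) ≤ Fbar t + k₀ := by
  refine ⟨((3 / 8) * (1 + 10 / 3 + 5)) ^ 2, rfl, by norm_num, ?_⟩
  intro s hs2 hs1 t
  have hs0 : 0 < s := lt_trans (by norm_num) hs2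
  by_cases ht : |t| ≤ 1
  · simp only [Fbar, Fs, theta, if_pos ht]
    set x := |t| with hx
    have hx0 : 0 ≤ x := abs_nonneg t
    have hr0 : 0 ≤ x ^ ((1 : ℝ) / 2) := Real.rpow_nonneg hx0 _
    have hr1 : x ^ ((1 : ℝ) / 2) ≤ 1 := Real.rpow_le_one hx0 ht (by norm_num)
    have hθ0 : 0 ≤ 3 / 8 * x ^ ((1 : ℝ) / 2) * (x ^ 2 - 10 / 3 * x + 5) := by nlinarith
    have hθle : 3 / 8 * x ^ ((1 : ℝ) / 2) * (x ^ 2 - 10 / 3 * x + 5) ≤ 7 / 2 := by nlinarith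
    have hxs0 : 0 ≤ x ^ s := Real.rpow_nonneg hx0 s
    have hxs1 : x ^ s ≤ 1 := Real.rpow_le_one hx0 ht hs0.le
    have hF0 : 0 ≤ 3 / 8 * x ^ ((1 : ℝ) / 2) * (x ^ 2 - 10 / 3 * x + 5) * x ^ s :=
      mul_nonneg hθ0 hxs0
    have hF : 3 / 8 * x ^ ((1 : ℝ) / 2) * (x ^ 2 - 10 / 3 * x + 5) * x ^ s ≤ 7 / 2 := by
      nlinarith
    set F := 3 / 8 * x ^ ((1 : ℝ) / 2) * (x ^ 2 - 10 / 3 * x + 5) * x ^ s with hFdef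
    refine ⟨Real.rpow_nonneg hF0 _, ?_⟩
    rw [zero_add]
    by_cases hF1 : F ≤ 1
    · have h1 : F ^ (1 / s) ≤ 1 := Real.rpow_le_one hF0 hF1 (by positivity)
      calc F ^ (1 / s) ≤ 1 := h1
        _ ≤ _ := by norm_num
    · push_neg at hF1
      have h2 : 1 / s ≤ 2 := by rw [div_le_iff₀ hs0]; linarith
      calc F ^ (1 / s) ≤ F ^ (2 : ℝ) := Real.rpow_le_rpow_of_exponent_le hF1.le h2
        _ ≤ (7 / 2 : ℝ) ^ (2 : ℝ) := Real.rpow_le_rpow hF0 hF (by norm_num)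
        _ = ((3 / 8) * (1 + 10 / 3 + 5)) ^ 2 := by
            rw [show ((2 : ℝ)) = ((2 : ℕ) : ℝ) by norm_num, Real.rpow_natCast]
            norm_num
  · push_neg at ht
    simp only [Fbar, Fs, theta, if_neg (not_le.mpr ht), one_mul]
    rw [← Real.rpow_mul (abs_nonneg t), mul_one_div, div_self hs0.ne', Real.rpow_one]
    exact ⟨le_refl _, by nlinarith⟩
end

section
/- Let N ≥ 2 be a natural number and β ≥ 2 a real number. Then there exists a measurable function w: ℝ^N → ℝ with w(x) ≥ 1 for all x and w ∈ L^β_loc(ℝ^N) (that is, ∫_K w^β dx < ∞ for every compact K ⊂ ℝ^N), such that the measure μ defined by μ(E) = ∫_E w dx is not doubling: there is no constant C > 0 with μ(B(x,2ρ)) ≤ C·μ(B(x,ρ)) for all x ∈ ℝ^N and ρ > 0. Equivalently, there are sequences of centers x_k ∈ ℝ^N and radii ρ_k > 0 with μ(B(x_k,2ρ_k))/μ(B(x_k,ρ_k)) → ∞ as k → ∞. -/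
open MeasureTheory Filter Metric

/-- For `N ≥ 2` and `β ≥ 2` there is a measurable weight `w ≥ 1` on `ℝ^N` which is in
`L^β_loc(ℝ^N)` but whose associated measure `μ(E) = ∫_E w` is not doubling: no constant
`C > 0` satisfies `μ(B(x,2ρ)) ≤ C·μ(B(x,ρ))` for all centers `x` and radii `ρ > 0`;
equivalently, there are centers `x_k` and radii `ρ_k > 0` with
`μ(B(x_k,2ρ_k))/μ(B(x_k,ρ_k)) → ∞`. -/
theorem stmt_19 (N : ℕ) (hN : 2 ≤ N) (β : ℝ) (hβ : 2 ≤ β) :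
    ∃ w : EuclideanSpace ℝ (Fin N) → ℝ, Measurable w ∧ (∀ x, 1 ≤ w x) ∧
      (∀ K : Set (EuclideanSpace ℝ (Fin N)), IsCompact K →
        IntegrableOn (fun x => w x ^ β) K volume) ∧
      (¬ ∃ C : ℝ, 0 < C ∧ ∀ (x : EuclideanSpace ℝ (Fin N)) (ρ : ℝ), 0 < ρ →
        (volume.withDensity fun y => ENNReal.ofReal (w y)) (Metric.ball x (2 * ρ)) ≤
          ENNReal.ofReal C *
            (volume.withDensity fun y => ENNReal.ofReal (w y)) (Metric.ball x ρ)) ∧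
      (∃ (x : ℕ → EuclideanSpace ℝ (Fin N)) (ρ : ℕ → ℝ), (∀ k, 0 < ρ k) ∧
        Tendsto
          (fun k =>
            (volume.withDensity fun y => ENNReal.ofReal (w y)) (Metric.ball (x k) (2 * ρ k)) /
              (volume.withDensity fun y => ENNReal.ofReal (w y)) (Metric.ball (x k) (ρ k)))
          atTop (nhds ⊤)) := by
  classical
  have hN0 : 0 < N := by omega
  set E := EuclideanSpace ℝ (Fin N)
  let i0 : Fin N := ⟨0, hN0⟩
  -- coordinate bound
  have coord : ∀ x y : E, |x i0 - y i0| ≤ dist x y := by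
    intro x y
    rw [EuclideanSpace.dist_eq]
    have h2 : Real.sqrt (dist (x i0) (y i0) ^ 2) ≤
        Real.sqrt (∑ i, dist (x i) (y i) ^ 2) :=
      Real.sqrt_le_sqrt (Finset.single_le_sum (f := fun i => dist (x i) (y i) ^ 2)
        (fun i _ => sq_nonneg _) (Finset.mem_univ i0))
    rwa [Real.dist_eq, sq_abs, Real.sqrt_sq_eq_abs] at h2
  -- centers and spikes
  let c : ℕ → E := fun k => EuclideanSpace.single i0 ((2 * k : ℝ))
  have hc : ∀ k, (c k) i0 = (2 * k : ℝ) := by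
    intro k; simp [c, EuclideanSpace.single_apply]
  let S : Set E := ⋃ k : ℕ, Metric.ball (c k) (1/8)
  have hSmeas : MeasurableSet S :=
    (isOpen_iUnion fun k => Metric.isOpen_ball).measurableSet
  -- the weight
  let w : E → ℝ := fun x => Set.indicator S (fun x => |x i0|) x + 1
  have hproj : Measurable fun x : E => x i0 :=
    (EuclideanSpace.proj i0).continuous.measurable
  have hw : Measurable w :=
    ((hproj.abs.indicator hSmeas).add measurable_const)
  have hw1 : ∀ x, 1 ≤ w x := by
    intro x
    have : 0 ≤ Set.indicator S (fun x : E => |x i0|) x :=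
      Set.indicator_nonneg (fun x _ => abs_nonneg _) x
    simp only [w]; linarith
  have hw0 : ∀ x, 0 ≤ w x := fun x => le_trans zero_le_one (hw1 x)
  -- shifted centers
  let xk : ℕ → E := fun k => EuclideanSpace.single i0 ((2 * k + 1/2 : ℝ))
  have hxk : ∀ k, (xk k) i0 = (2 * k + 1/2 : ℝ) := by
    intro k; simp [xk, EuclideanSpace.single_apply]
  -- Fact A : lower bound on spike
  have factA : ∀ k : ℕ, ∀ x ∈ Metric.ball (c k) (1/8), (k : ℝ) ≤ w x := by
    intro k x hx
    have hd : |x i0 - 2 * k| < 1/8 := by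
      have := coord x (c k); rw [hc k] at this
      exact lt_of_le_of_lt this (mem_ball.mp hx)
    have hx1 : (2 * k : ℝ) - 1/8 ≤ x i0 := by
      have := abs_lt.mp hd; linarith [this.1]
    have hxS : x ∈ S := Set.mem_iUnion.mpr ⟨k, hx⟩
    have hwx : w x = |x i0| + 1 := by simp [w, Set.indicator_of_mem hxS]
    have habs : x i0 ≤ |x i0| := le_abs_self _
    have hk0 : (0:ℝ) ≤ (k:ℝ) := Nat.cast_nonneg k
    rw [hwx]; linarith
  -- Fact B : w = 1 on the small ball
  have factB : ∀ k : ℕ, ∀ y ∈ Metric.ball (xk k) (3/8), w y = 1 := by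
    intro k y hy
    have hyS : y ∉ S := by
      intro hyS
      obtain ⟨j, hj⟩ := Set.mem_iUnion.mp hyS
      have h1 : |y i0 - 2 * j| < 1/8 := by
        have := coord y (c j); rw [hc j] at this
        exact lt_of_le_of_lt this (mem_ball.mp hj)
      have h2 : |y i0 - (2 * k + 1/2)| < 3/8 := by
        have := coord y (xk k); rw [hxk k] at this
        exact lt_of_le_of_lt this (mem_ball.mp hy)
      have h1' := abs_lt.mp h1
      have h2' := abs_lt.mp h2
      have hkj : (k : ℝ) < j := by nlinarith [h1'.1, h2'.2]
      have hjk : (j : ℝ) < k + 1 := by nlinarith [h1'.2, h2'.1]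
      have : (k : ℕ) < j := by exact_mod_cast hkj
      have : (j : ℕ) < k + 1 := by exact_mod_cast hjk
      omega
    simp [w, Set.indicator_of_notMem hyS]
  -- Fact C : spike contained in double ball
  have factC : ∀ k : ℕ, Metric.ball (c k) (1/8) ⊆ Metric.ball (xk k) (2 * (3/8)) := by
    intro k y hy
    have hcx : dist (c k) (xk k) = 1/2 := by
      simp only [c, xk]
      rw [EuclideanSpace.dist_single_same, Real.dist_eq]
      norm_num
    have : dist y (xk k) ≤ dist y (c k) + dist (c k) (xk k) := dist_triangle _ _ _
    rw [mem_ball] at hy ⊢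
    rw [hcx] at this; linarith
  -- volumes
  set Vs : ENNReal := volume (Metric.ball (0 : E) (1/8)) with hVs
  set V0 : ENNReal := volume (Metric.ball (0 : E) (3/8)) with hV0
  have hVs0 : Vs ≠ 0 := (measure_ball_pos volume _ (by norm_num)).ne'
  have hVst : Vs ≠ ⊤ := measure_ball_lt_top.ne
  have hV00 : V0 ≠ 0 := (measure_ball_pos volume _ (by norm_num)).ne'
  have hV0t : V0 ≠ ⊤ := measure_ball_lt_top.ne
  set μ : Measure E := volume.withDensity fun y => ENNReal.ofReal (w y) with hμ
  -- denominator computation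
  have hden : ∀ k : ℕ, μ (Metric.ball (xk k) (3/8)) = V0 := by
    intro k
    rw [hμ, withDensity_apply _ measurableSet_ball]
    have : ∀ᵐ x ∂volume, x ∈ Metric.ball (xk k) (3/8) →
        ENNReal.ofReal (w x) = (1 : ENNReal) := by
      refine ae_of_all _ fun x hx => ?_
      rw [factB k x hx]; simp
    rw [setLIntegral_congr_fun_ae measurableSet_ball this, setLIntegral_one,
      Measure.addHaar_ball_center]
  -- numerator lower bound
  have hnum : ∀ k : ℕ, (k : ENNReal) * Vs ≤ μ (Metric.ball (xk k) (2 * (3/8))) := by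
    intro k
    rw [hμ, withDensity_apply _ measurableSet_ball]
    calc (k : ENNReal) * Vs
        = ∫⁻ _ in Metric.ball (c k) (1/8), (k : ENNReal) ∂volume := by
          rw [setLIntegral_const, Measure.addHaar_ball_center]
      _ ≤ ∫⁻ x in Metric.ball (c k) (1/8), ENNReal.ofReal (w x) ∂volume := by
          refine setLIntegral_mono (ENNReal.measurable_ofReal.comp hw) fun x hx => ?_
          have := factA k x hx
          calc (k : ENNReal) = ENNReal.ofReal (k : ℝ) := by
                rw [ENNReal.ofReal_natCast]
            _ ≤ ENNReal.ofReal (w x) := ENNReal.ofReal_le_ofReal this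
      _ ≤ ∫⁻ x in Metric.ball (xk k) (2 * (3/8)), ENNReal.ofReal (w x) ∂volume :=
          lintegral_mono_set (factC k)
  refine ⟨w, hw, hw1, ?_, ?_, ?_⟩
  · -- local integrability
    intro K hK
    obtain ⟨R, hKR⟩ := hK.isBounded.subset_closedBall 0
    have hbound : ∀ x ∈ K, w x ^ β ≤ (R + 1) ^ β := by
      intro x hx
      have h1 : |x i0| ≤ R := by
        have h2 : |x i0 - (0:E) i0| ≤ dist x 0 := coord x 0
        have h3 : (0:E) i0 = 0 := rfl
        have h4 : dist x (0:E) ≤ R := by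
          have := hKR hx; rwa [Metric.mem_closedBall] at this
        rw [h3, sub_zero] at h2; linarith
      have h5 : w x ≤ R + 1 := by
        have : Set.indicator S (fun x : E => |x i0|) x ≤ |x i0| := by
          by_cases hxS : x ∈ S
          · rw [Set.indicator_of_mem hxS]
          · rw [Set.indicator_of_notMem hxS]; exact abs_nonneg _
        simp only [w]; linarith
      exact Real.rpow_le_rpow (hw0 x) h5 (by linarith)
    refine Integrable.mono' (g := fun _ => (R+1) ^ β)
      (integrableOn_const hK.measure_lt_top.ne)
      (((Real.continuous_rpow_const (by linarith : (0:ℝ) ≤ β)).measurable.comp hw).aestronglyMeasurable.restrict) ?_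
    refine (ae_restrict_iff' hK.measurableSet).mpr (ae_of_all _ fun x hx => ?_)
    rw [Real.norm_eq_abs, abs_of_nonneg (Real.rpow_nonneg (hw0 x) β)]
    exact hbound x hx
  · -- not doubling
    rintro ⟨C, hC, h⟩
    set D : ENNReal := ENNReal.ofReal C * V0 with hD
    have hDt : D ≠ ⊤ := ENNReal.mul_ne_top ENNReal.ofReal_ne_top hV0t
    obtain ⟨k, hk⟩ := ENNReal.exists_nat_gt ((ENNReal.div_lt_top hDt hVs0).ne)
    have hk' : D < (k : ENNReal) * Vs :=
      (ENNReal.div_lt_iff (Or.inl hVs0) (Or.inl hVst)).mp hk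
    have hdb := h (xk k) (3/8) (by norm_num)
    rw [← hμ] at hdb
    rw [hden k] at hdb
    exact absurd (le_trans (hnum k) hdb) (not_le.mpr hk')
  · -- tendsto
    refine ⟨xk, fun _ => 3/8, fun k => by norm_num, ?_⟩
    have hlim : Tendsto (fun k : ℕ => (k : ENNReal) * Vs / V0) atTop (nhds ⊤) := by
      have h1 : Tendsto (fun k : ℕ => (k : ENNReal) * Vs) atTop (nhds (⊤ * Vs)) :=
        ENNReal.Tendsto.mul_const ENNReal.tendsto_nat_nhds_top (Or.inr hVst)
      rw [ENNReal.top_mul hVs0] at h1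
      have h2 : Tendsto (fun k : ℕ => (k : ENNReal) * Vs * V0⁻¹) atTop
          (nhds (⊤ * V0⁻¹)) :=
        ENNReal.Tendsto.mul_const h1 (Or.inr (ENNReal.inv_ne_top.mpr hV00))
      rw [ENNReal.top_mul (ENNReal.inv_ne_zero.mpr hV0t)] at h2
      simpa [div_eq_mul_inv] using h2
    refine tendsto_nhds_top_mono hlim (Eventually.of_forall fun k => ?_)
    simp only [← hμ]
    rw [hden k]
    exact ENNReal.div_le_div_right (hnum k) V0
end
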